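/- The parameter-dependent semiflow possesses τ₃-slow relaxations if and only if at least one of the following holds: (1) there exist a point (x*, k*) ∈ X × K, a sequence (xₙ, kₙ) → (x*, k*), a point y ∈ ω(x*, k*), and δ > 0 such that dist(y, ω(xₙ, kₙ)) ≥ δ for every n (ω(x,k)-bifurcations); (2) there exist x ∈ X and k ∈ K such that the (k,x)-motion is whole and x ∉ ω(x,k) (the motion is whole but not Poisson positively stable). -/

import Mathlib

open Filter Topology Metric Set MeasureTheory
open scoped ENNReal

/-- A parameter-dependent semiflow on a metric space `X` with parameter space `K`:
a map `f : [0,∞) × X × K → X` (encoded with time in `ℝ`, with conditions only for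
nonnegative times), continuous on `[0,∞) × X × K`, satisfying the semigroup
identities, and injective in `x` for each fixed time and parameter. -/
structure PSemiflow (X K : Type*) [MetricSpace X] [MetricSpace K] where
  f : ℝ → X → K → X
  cont : ContinuousOn (fun p : ℝ × X × K => f p.1 p.2.1 p.2.2) {p : ℝ × X × K | 0 ≤ p.1}
  map_zero : ∀ x k, f 0 x k = x
  semigroup : ∀ t t' : ℝ, 0 ≤ t → 0 ≤ t' → ∀ x k, f t (f t' x k) k = f (t + t') x k
  inj : ∀ t : ℝ, 0 ≤ t → ∀ k, Function.Injective fun x => f t x k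

namespace PSemiflow

variable {X K : Type*} [MetricSpace X] [MetricSpace K] (S : PSemiflow X K)

/-- The ω-limit set `ω(x,k)`: all limits of `f(tₙ,x,k)` along sequences `tₙ → ∞`. -/
def omega (x : X) (k : K) : Set X :=
  {y | ∃ t : ℕ → ℝ, (∀ n, 0 ≤ t n) ∧ Tendsto t atTop atTop ∧
      Tendsto (fun n => S.f (t n) x k) atTop (𝓝 y)}

/-- The complete ω-limit set `ω(k) = ⋃ₓ ω(x,k)`. -/
def omegaK (k : K) : Set X := ⋃ x : X, S.omega x k

/-- The relaxation time `τ₃(x,k,ε)`: time of the final entry of the motion into the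
`ε`-neighbourhood of `ω(x,k)`. -/
noncomputable def tau3 (x : X) (k : K) (ε : ℝ) : ℝ :=
  sInf {t : ℝ | 0 ≤ t ∧ ∀ t' > t, infDist (S.f t' x k) (S.omega x k) < ε}

/-- The system possesses τ₃-slow relaxations. -/
def SlowTau3 : Prop := ∃ ε > (0:ℝ), ∀ T > (0:ℝ), ∃ x k, S.tau3 x k ε > T

/-- The (k,x)-motion is whole: it extends to a full trajectory `φ : ℝ → X`. -/
def IsWholeMotion (x : X) (k : K) (φ : ℝ → X) : Prop :=
  φ 0 = x ∧ ∀ s t : ℝ, 0 ≤ t → S.f t (φ s) k = φ (s + t)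

end PSemiflow

/-- The α-limit set of a whole motion `φ`: all limits of `φ(tₙ)` with `tₙ → -∞`. -/
def alphaLimit {X : Type*} [MetricSpace X] (φ : ℝ → X) : Set X :=
  {y | ∃ t : ℕ → ℝ, Tendsto t atTop atBot ∧ Tendsto (fun n => φ (t n)) atTop (𝓝 y)}

namespace PSemiflow
variable {X K : Type*} [MetricSpace X] [MetricSpace K] (S : PSemiflow X K)

end PSemiflow


namespace PSemiflow
variable {X K : Type*} [MetricSpace X] [MetricSpace K] (S : PSemiflow X K)

lemma tendsto_f' {α : Type*} {l : Filter α} {t : ℝ} (ht : 0 ≤ t)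
    {u : α → X} {v : α → K} {x : X} {k : K}
    (hu : Tendsto u l (𝓝 x)) (hv : Tendsto v l (𝓝 k)) :
    Tendsto (fun a => S.f t (u a) (v a)) l (𝓝 (S.f t x k)) := by
  have h1 : Tendsto (fun a => ((t, u a, v a) : ℝ × X × K)) l (𝓝 (t, x, k)) :=
    tendsto_const_nhds.prodMk_nhds (hu.prodMk_nhds hv)
  have h2 : Tendsto (fun a => ((t, u a, v a) : ℝ × X × K)) l
      (𝓝[{p : ℝ × X × K | 0 ≤ p.1}] (t, x, k)) :=
    tendsto_nhdsWithin_of_tendsto_nhds_of_eventually_within _ h1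
      (Eventually.of_forall fun a => ht)
  exact Filter.Tendsto.comp (S.cont (t, x, k) ht) h2

lemma omega_nonempty' [CompactSpace X] (x : X) (k : K) : (S.omega x k).Nonempty := by
  obtain ⟨z, -, φ, hφ, hz⟩ :=
    isCompact_univ.tendsto_subseq (x := fun n : ℕ => S.f n x k) (fun n => mem_univ _)
  refine ⟨z, fun j => (φ j : ℝ), fun j => Nat.cast_nonneg _, ?_, hz⟩
  exact tendsto_natCast_atTop_atTop.comp hφ.tendsto_atTop

lemma omega_f' (x : X) (k : K) {s : ℝ} (hs : 0 ≤ s) :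
    S.omega (S.f s x k) k = S.omega x k := by
  ext y
  constructor
  · rintro ⟨t, ht0, htop, hlim⟩
    refine ⟨fun n => t n + s, fun n => by show (0:ℝ) ≤ t n + s; linarith [ht0 n], tendsto_atTop_add_const_right _ _ htop, ?_⟩
    refine hlim.congr fun n => ?_
    rw [S.semigroup (t n) s (ht0 n) hs]
  · rintro ⟨t, ht0, htop, hlim⟩
    refine ⟨fun n => max (t n - s) 0, fun n => le_max_right _ _,
      tendsto_atTop_mono (fun n => le_max_left _ _) (tendsto_atTop_add_const_right _ _ htop), ?_⟩
    refine hlim.congr' ?_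
    filter_upwards [htop.eventually (eventually_ge_atTop s)] with n hn
    rw [max_eq_left (by linarith), S.semigroup (t n - s) s (by linarith) hs]
    congr 1; ring

lemma isClosed_omega' (x : X) (k : K) : IsClosed (S.omega x k) := by
  rw [← isSeqClosed_iff_isClosed]
  intro u z hu huz
  have hpick : ∀ j : ℕ, ∃ r : ℝ, 0 ≤ r ∧ (j : ℝ) < r ∧ dist (S.f r x k) (u j) < 1 / (j + 1) := by
    intro j
    obtain ⟨t, ht0, htop, hlim⟩ := hu j
    have h1 : ∀ᶠ n in atTop, (j : ℝ) < t n := htop.eventually (eventually_gt_atTop _)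
    have h2 : ∀ᶠ n in atTop, dist (S.f (t n) x k) (u j) < 1 / (j + 1) :=
      Metric.tendsto_nhds.mp hlim _ (by positivity)
    obtain ⟨n, hn1, hn2⟩ := (h1.and h2).exists
    exact ⟨t n, ht0 n, hn1, hn2⟩
  choose r hr0 hrgt hrd using hpick
  refine ⟨r, hr0, tendsto_atTop_mono (fun j => (hrgt j).le) tendsto_natCast_atTop_atTop, ?_⟩
  rw [tendsto_iff_dist_tendsto_zero]
  refine squeeze_zero (g := fun j : ℕ => 1 / (j + 1) + dist (u j) z) (fun j => dist_nonneg)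
    (fun j => (dist_triangle _ (u j) z).trans (by have := (hrd j).le; linarith)) ?_
  have := tendsto_iff_dist_tendsto_zero.mp huz
  simpa using tendsto_one_div_add_atTop_nhds_zero_nat.add this

lemma exists_forall_infDist_lt' [CompactSpace X] (x : X) (k : K) {ε : ℝ} (hε : 0 < ε) :
    ∃ T : ℝ, 0 ≤ T ∧ ∀ t' > T, infDist (S.f t' x k) (S.omega x k) < ε := by
  by_contra h
  push_neg at h
  choose t ht hd using fun n : ℕ => h n (Nat.cast_nonneg n)
  obtain ⟨z, -, φ, hφ, hz⟩ :=
    isCompact_univ.tendsto_subseq (x := fun n => S.f (t n) x k) (fun n => mem_univ _)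
  have hcast : ∀ j : ℕ, (j : ℝ) ≤ t (φ j) := fun j =>
    le_trans (Nat.cast_le.2 hφ.le_apply) (ht (φ j)).le
  have hzω : z ∈ S.omega x k :=
    ⟨t ∘ φ, fun j => le_trans (Nat.cast_nonneg _) (hcast j),
      tendsto_atTop_mono hcast tendsto_natCast_atTop_atTop, hz⟩
  have h1 : Tendsto (fun j => infDist (S.f (t (φ j)) x k) (S.omega x k)) atTop
      (𝓝 (infDist z (S.omega x k))) := ((continuous_infDist_pt _).tendsto z).comp hz
  have h2 : ε ≤ infDist z (S.omega x k) := ge_of_tendsto' h1 fun j => hd (φ j)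
  rw [infDist_zero_of_mem hzω] at h2
  linarith

lemma le_tau3' [CompactSpace X] {x : X} {k : K} {ε t₀ : ℝ} (hε : 0 < ε)
    (h : ε ≤ infDist (S.f t₀ x k) (S.omega x k)) : t₀ ≤ S.tau3 x k ε := by
  obtain ⟨T, hT0, hT⟩ := S.exists_forall_infDist_lt' x k hε
  refine le_csInf ⟨T, hT0, hT⟩ ?_
  rintro b ⟨hb0, hb⟩
  by_contra hlt
  push_neg at hlt
  exact absurd (hb t₀ hlt) (not_lt.2 h)


end PSemiflow

lemma exists_ulim' {Y : Type*} [TopologicalSpace Y] [CompactSpace Y] (U : Ultrafilter ℕ)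
    (u : ℕ → Y) : ∃ y, Tendsto u (↑U) (𝓝 y) := by
  obtain ⟨y, -, hy⟩ := isCompact_univ.ultrafilter_le_nhds (U.map u) (by simp)
  exact ⟨y, by rw [Tendsto, ← Ultrafilter.coe_map]; exact hy⟩


/-- Theorem 2.7: the system possesses τ₃-slow relaxations iff (1) there are
`ω(x,k)`-bifurcations, or (2) there is a whole `(k,x)`-motion which is not Poisson
positively stable (`x ∉ ω(x,k)`). -/
theorem slowTau3_iff {X K : Type*} [MetricSpace X] [CompactSpace X]
    [MetricSpace K] [CompactSpace K] (S : PSemiflow X K) :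
    S.SlowTau3 ↔
      ((∃ (xstar : X) (kstar : K) (xs : ℕ → X) (ks : ℕ → K) (y : X) (δ : ℝ), 0 < δ ∧
          Tendsto xs atTop (𝓝 xstar) ∧ Tendsto ks atTop (𝓝 kstar) ∧
          y ∈ S.omega xstar kstar ∧ ∀ n, δ ≤ infDist y (S.omega (xs n) (ks n))) ∨
        (∃ (x : X) (k : K) (φ : ℝ → X), S.IsWholeMotion x k φ ∧ x ∉ S.omega x k)) := by
  constructor
  · -- forward direction
    rintro ⟨ε, hε, hT⟩
    by_cases h1 : (∃ (xstar : X) (kstar : K) (xs : ℕ → X) (ks : ℕ → K) (y : X) (δ : ℝ), 0 < δ ∧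
          Tendsto xs atTop (𝓝 xstar) ∧ Tendsto ks atTop (𝓝 kstar) ∧
          y ∈ S.omega xstar kstar ∧ ∀ n, δ ≤ infDist y (S.omega (xs n) (ks n)))
    · exact Or.inl h1
    right
    push_neg at h1
    -- extract badly relaxing points
    have hTn : ∀ n : ℕ, ∃ x k, S.tau3 x k ε > (n : ℝ) + 1 := fun n => hT _ (by positivity)
    choose xs ks hxk using hTn
    have key : ∀ n : ℕ, ∃ t' : ℝ, (n : ℝ) < t' ∧
        ε ≤ infDist (S.f t' (xs n) (ks n)) (S.omega (xs n) (ks n)) := by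
      intro n
      by_contra h
      push_neg at h
      have hmem : (n : ℝ) ∈ {t : ℝ | 0 ≤ t ∧
          ∀ t' > t, infDist (S.f t' (xs n) (ks n)) (S.omega (xs n) (ks n)) < ε} :=
        ⟨Nat.cast_nonneg n, fun t' ht' => h t' ht'⟩
      have hb : BddBelow {t : ℝ | 0 ≤ t ∧
          ∀ t' > t, infDist (S.f t' (xs n) (ks n)) (S.omega (xs n) (ks n)) < ε} :=
        ⟨0, fun t ht => ht.1⟩
      have h2 : S.tau3 (xs n) (ks n) ε ≤ (n : ℝ) := csInf_le hb hmem
      have h3 := hxk n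
      linarith
    choose ts hts hd using key
    -- ultrafilter limits
    set U : Ultrafilter ℕ := Ultrafilter.of atTop with hUdef
    have hU : (↑U : Filter ℕ) ≤ atTop := Ultrafilter.of_le _
    obtain ⟨kstar, hks⟩ := exists_ulim' U ks
    choose w hw using fun m : ℕ => exists_ulim' U (fun n => S.f (ts n - m) (xs n) (ks n))
    have htsn : ∀ m n : ℕ, m ≤ n → (0:ℝ) ≤ ts n - m := by
      intro m n hmn
      have h1 : (m : ℝ) ≤ n := Nat.cast_le.2 hmn
      have := hts n
      linarith
    -- key limit lemma
    have hL : ∀ (r : ℝ), 0 ≤ r → ∀ m : ℕ,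
        Tendsto (fun n => S.f (r + (ts n - m)) (xs n) (ks n)) (↑U) (𝓝 (S.f r (w m) kstar)) := by
      intro r hr m
      have hlim : Tendsto (fun n => S.f r (S.f (ts n - m) (xs n) (ks n)) (ks n)) (↑U)
          (𝓝 (S.f r (w m) kstar)) := S.tendsto_f' hr (hw m) hks
      refine Tendsto.congr' ?_ hlim
      filter_upwards [hU (eventually_ge_atTop m)] with n hn
      rw [S.semigroup r (ts n - m) hr (htsn m n hn)]
    -- compatibility of the w's
    have hcompat : ∀ m m' : ℕ, m ≤ m' → S.f ((m' : ℝ) - m) (w m') kstar = w m := by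
      intro m m' hmm
      have hnn : (0:ℝ) ≤ (m' : ℝ) - m := sub_nonneg.2 (Nat.cast_le.2 hmm)
      have h1 := hL ((m' : ℝ) - m) hnn m'
      have h2 : (fun n => S.f (((m' : ℝ) - m) + (ts n - m')) (xs n) (ks n)) =
          fun n => S.f (ts n - m) (xs n) (ks n) := by
        funext n; congr 1; ring
      rw [h2] at h1
      exact tendsto_nhds_unique h1 (hw m)
    -- building the whole motion
    have step : ∀ (s : ℝ) (m m' : ℕ), m ≤ m' → 0 ≤ s + m →
        S.f (s + m') (w m') kstar = S.f (s + m) (w m) kstar := by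
      intro s m m' hmm hs
      conv_rhs => rw [← hcompat m m' hmm]
      rw [S.semigroup (s + m) ((m' : ℝ) - m) hs (sub_nonneg.2 (Nat.cast_le.2 hmm))]
      congr 1; ring
    set φ : ℝ → X := fun s => S.f (s + ⌈(0 : ℝ) ⊔ (-s)⌉₊) (w ⌈(0 : ℝ) ⊔ (-s)⌉₊) kstar with hφdef
    have hMs : ∀ s : ℝ, 0 ≤ s + ⌈(0 : ℝ) ⊔ (-s)⌉₊ := by
      intro s
      have h1 : -s ≤ ((0 : ℝ) ⊔ (-s)) := le_max_right _ _
      have h2 : ((0 : ℝ) ⊔ (-s)) ≤ (⌈(0 : ℝ) ⊔ (-s)⌉₊ : ℝ) := Nat.le_ceil _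
      linarith
    have hphi : ∀ (s : ℝ) (m : ℕ), 0 ≤ s + m → S.f (s + m) (w m) kstar = φ s := by
      intro s m hm
      rcases le_total m ⌈(0 : ℝ) ⊔ (-s)⌉₊ with hc | hc
      · exact (step s m _ hc hm).symm
      · exact step s _ m hc (hMs s)
    have hwhole : S.IsWholeMotion (w 0) kstar φ := by
      constructor
      · have h1 := hphi 0 0 (by norm_num)
        rw [← h1]
        norm_num [S.map_zero]
      · intro s t ht
        have h0M := hMs s
        have h1 : S.f t (φ s) kstar = S.f (t + (s + ⌈(0 : ℝ) ⊔ (-s)⌉₊)) (w ⌈(0 : ℝ) ⊔ (-s)⌉₊) kstar := by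
          show S.f t (S.f (s + (⌈(0 : ℝ) ⊔ (-s)⌉₊ : ℝ)) (w ⌈(0 : ℝ) ⊔ (-s)⌉₊) kstar) kstar = _
          exact S.semigroup t _ ht h0M _ _
        rw [h1]
        have h2 : t + (s + (⌈(0 : ℝ) ⊔ (-s)⌉₊ : ℝ)) = (s + t) + (⌈(0 : ℝ) ⊔ (-s)⌉₊ : ℝ) := by ring
        rw [h2]
        exact hphi (s + t) _ (by linarith)
    -- the limit of the bad points is w 0
    have hy : Tendsto (fun n => S.f (ts n) (xs n) (ks n)) (↑U) (𝓝 (w 0)) := by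
      have := hw 0
      simpa using this
    -- extract an honest subsequence
    have hA : ∀ j : ℕ, ∃ n, j ≤ n ∧ dist (S.f (ts n) (xs n) (ks n)) (w 0) < 1 / (j + 1) ∧
        dist (ks n) kstar < 1 / (j + 1) := by
      intro j
      have e1 : ∀ᶠ n in (↑U : Filter ℕ), dist (S.f (ts n) (xs n) (ks n)) (w 0) < 1 / (j + 1) :=
        Metric.tendsto_nhds.mp hy _ (by positivity)
      have e2 : ∀ᶠ n in (↑U : Filter ℕ), dist (ks n) kstar < 1 / (j + 1) :=
        Metric.tendsto_nhds.mp hks _ (by positivity)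
      have e3 : ∀ᶠ n in (↑U : Filter ℕ), j ≤ n := hU (eventually_ge_atTop j)
      exact ((e3.and (e1.and e2)).exists).imp fun n hn => ⟨hn.1, hn.2.1, hn.2.2⟩
    choose σ hσ1 hσ2 hσ3 using hA
    have hσtop : Tendsto σ atTop atTop := tendsto_atTop_mono hσ1 tendsto_id
    have hσy : Tendsto (fun j => S.f (ts (σ j)) (xs (σ j)) (ks (σ j))) atTop (𝓝 (w 0)) := by
      rw [tendsto_iff_dist_tendsto_zero]
      exact squeeze_zero (fun j => dist_nonneg) (fun j => (hσ2 j).le)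
        (by simpa using (tendsto_one_div_add_atTop_nhds_zero_nat : Tendsto (fun n : ℕ => 1 / ((n : ℝ) + 1)) atTop (𝓝 0)))
    have hσk : Tendsto (fun j => ks (σ j)) atTop (𝓝 kstar) := by
      rw [tendsto_iff_dist_tendsto_zero]
      exact squeeze_zero (fun j => dist_nonneg) (fun j => (hσ3 j).le)
        (by simpa using (tendsto_one_div_add_atTop_nhds_zero_nat : Tendsto (fun n : ℕ => 1 / ((n : ℝ) + 1)) atTop (𝓝 0)))
    -- every point of ω(w 0, kstar) is at distance ≥ ε from w 0
    have hfar : ∀ y ∈ S.omega (w 0) kstar, ε ≤ dist y (w 0) := by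
      intro y hyω
      have hget : ∀ J : ℕ, ∃ n : ℕ,
          infDist y (S.omega (S.f (ts (σ (n + J))) (xs (σ (n + J))) (ks (σ (n + J))))
            (ks (σ (n + J)))) < 1 / (J + 1) := by
        intro J
        have hxs' : Tendsto (fun n => S.f (ts (σ (n + J))) (xs (σ (n + J))) (ks (σ (n + J))))
            atTop (𝓝 (w 0)) := hσy.comp (tendsto_add_atTop_nat J)
        have hks' : Tendsto (fun n => ks (σ (n + J))) atTop (𝓝 kstar) :=
          hσk.comp (tendsto_add_atTop_nat J)
        exact h1 (w 0) kstar _ _ y (1 / (J + 1)) (by positivity) hxs' hks' hyω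
      choose nJ hnJ using hget
      set q : ℕ → ℕ := fun J => σ (nJ J + J) with hqdef
      have hqy : Tendsto (fun J => S.f (ts (q J)) (xs (q J)) (ks (q J))) atTop (𝓝 (w 0)) :=
        hσy.comp (tendsto_atTop_mono (fun J => Nat.le_add_left J (nJ J)) tendsto_id)
      have hineq : ∀ J : ℕ, ε - 1 / (J + 1) ≤ dist (S.f (ts (q J)) (xs (q J)) (ks (q J))) y := by
        intro J
        have h2 := hnJ J
        have hts0 : (0:ℝ) ≤ ts (q J) := by
          have := hts (q J)
          have h0 : (0:ℝ) ≤ (q J : ℝ) := Nat.cast_nonneg _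
          linarith
        rw [S.omega_f' _ _ hts0] at h2
        have h3 := hd (q J)
        have h4 := infDist_le_infDist_add_dist (x := S.f (ts (q J)) (xs (q J)) (ks (q J)))
          (y := y) (s := S.omega (xs (q J)) (ks (q J)))
        linarith
      have l1 : Tendsto (fun J : ℕ => dist (S.f (ts (q J)) (xs (q J)) (ks (q J))) y) atTop
          (𝓝 (dist (w 0) y)) := hqy.dist tendsto_const_nhds
      have l2 : Tendsto (fun J : ℕ => ε - 1 / ((J : ℝ) + 1)) atTop (𝓝 ε) := by
        simpa using tendsto_const_nhds.sub (tendsto_one_div_add_atTop_nhds_zero_nat : Tendsto (fun n : ℕ => 1 / ((n : ℝ) + 1)) atTop (𝓝 0))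
      have := le_of_tendsto_of_tendsto' l2 l1 hineq
      rwa [dist_comm] at this
    refine ⟨w 0, kstar, φ, hwhole, fun hmem => ?_⟩
    have := hfar _ hmem
    simp at this
    linarith
  · -- reverse direction
    rintro (⟨xstar, kstar, xs, ks, y, δ, hδ, hxs, hks, hyω, hfar⟩ | ⟨x, k, φ, ⟨hφ0, hφf⟩, hxω⟩)
    · refine ⟨δ / 3, by linarith, ?_⟩
      intro T hT
      obtain ⟨t, ht0, htop, hlim⟩ := hyω
      have h1 : ∀ᶠ j in atTop, T + 1 < t j := htop.eventually (eventually_gt_atTop _)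
      have h2 : ∀ᶠ j in atTop, dist (S.f (t j) xstar kstar) y < δ / 3 :=
        Metric.tendsto_nhds.mp hlim _ (by linarith)
      obtain ⟨j, hj1, hj2⟩ := (h1.and h2).exists
      have h3 : Tendsto (fun n => S.f (t j) (xs n) (ks n)) atTop (𝓝 (S.f (t j) xstar kstar)) :=
        S.tendsto_f' (ht0 j) hxs hks
      obtain ⟨n, hn⟩ := (Metric.tendsto_nhds.mp h3 (δ / 3) (by linarith)).exists
      refine ⟨xs n, ks n, ?_⟩
      have h4 := hfar n
      have h5 := infDist_le_infDist_add_dist (x := y) (y := S.f (t j) (xs n) (ks n))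
        (s := S.omega (xs n) (ks n))
      have h6 := dist_triangle y (S.f (t j) xstar kstar) (S.f (t j) (xs n) (ks n))
      rw [dist_comm] at hj2
      rw [dist_comm (S.f (t j) (xs n) (ks n)) (S.f (t j) xstar kstar)] at hn
      have h7 : δ / 3 ≤ infDist (S.f (t j) (xs n) (ks n)) (S.omega (xs n) (ks n)) := by
        linarith
      have h8 := S.le_tau3' (by linarith : (0:ℝ) < δ / 3) h7
      linarith
    · have hne := S.omega_nonempty' x k
      have hcl := S.isClosed_omega' x k
      have hpos : 0 < infDist x (S.omega x k) := by
        exact (hcl.notMem_iff_infDist_pos hne).1 hxω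
      refine ⟨infDist x (S.omega x k), hpos, ?_⟩
      intro T hT
      refine ⟨φ (-(T + 1)), k, ?_⟩
      have hx : S.f (T + 1) (φ (-(T + 1))) k = x := by
        rw [hφf _ _ (by linarith)]
        have h9 : -(T + 1) + (T + 1) = (0:ℝ) := by ring
        rw [h9, hφ0]
      have hω : S.omega (φ (-(T + 1))) k = S.omega x k := by
        have := S.omega_f' (φ (-(T + 1))) k (s := T + 1) (by linarith)
        rw [hx] at this
        exact this.symm
      have h7 : infDist x (S.omega x k) ≤
          infDist (S.f (T + 1) (φ (-(T + 1))) k) (S.omega (φ (-(T + 1))) k) := by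
        rw [hx, hω]
      have h8 := S.le_tau3' hpos h7
      linarith
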